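/- Let G be a finite simple bipartite graph and let T be an optimal tetragonal subgraph of G with |V(T)| = 2m ≥ 6. Then for every vertex v of G not in V(T), the number of neighbors of v in V(T) is at most m; moreover, if some vertex v outside V(T) has exactly m neighbors in V(T), then the subgraph of G induced by V(T) is isomorphic to the complete bipartite graph K_{m,m}. -/

import Mathlib

open SimpleGraph

namespace Dean

variable {V : Type*}

noncomputable def degN (G : SimpleGraph V) (v : V) : ℕ := (G.neighborSet v).ncard

def HasCycleMod (G : SimpleGraph V) (k : ℕ) (r : ℤ) : Prop :=
  ∃ (v : V) (c : G.Walk v v), c.IsCycle ∧ (k : ℤ) ∣ ((c.length : ℤ) - r)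

def HasConsecutiveCycles (G : SimpleGraph V) (k : ℕ) : Prop :=
  ∃ a : ℕ, ∀ i < k, ∃ (v : V) (c : G.Walk v v), c.IsCycle ∧ c.length = a + i

def HasAdmissibleCycles (G : SimpleGraph V) (k : ℕ) : Prop :=
  ∃ a d : ℕ, (d = 1 ∨ d = 2) ∧
    ∀ i < k, ∃ (v : V) (c : G.Walk v v), c.IsCycle ∧ c.length = a + d * i

/-- `HGraph k n t` : complete bipartite `K_{k,n}` minus `k - t` edges at the vertex
`Sum.inr 0` of the part of size `n`, so that this vertex keeps exactly `t` neighbours. -/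
def HGraph (k n t : ℕ) : SimpleGraph (Fin k ⊕ Fin n) :=
  SimpleGraph.fromRel fun x y =>
    ∃ (i : Fin k) (j : Fin n), x = Sum.inl i ∧ y = Sum.inr j ∧ (j.val ≠ 0 ∨ i.val < t)

def IsKkplus1 (k : ℕ) (G : SimpleGraph V) : Prop :=
  Nonempty (G ≃g completeGraph (Fin (k + 1)))

def IsKkk (k : ℕ) (G : SimpleGraph V) : Prop :=
  Nonempty (G ≃g completeBipartiteGraph (Fin k) (Fin k))

def IsHGraph (k : ℕ) (G : SimpleGraph V) : Prop :=
  ∃ n t, 2 ≤ t ∧ t ≤ k ∧ k < n ∧ Nonempty (G ≃g HGraph k n t)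

def IsExceptional (k : ℕ) (G : SimpleGraph V) : Prop :=
  IsKkplus1 k G ∨ IsKkk k G ∨ IsHGraph k G

def IsBipExceptional (k : ℕ) (G : SimpleGraph V) : Prop :=
  IsKkk k G ∨ IsHGraph k G

def IsCutVertex (G : SimpleGraph V) (v : V) : Prop :=
  ∃ (a b : V) (ha : a ≠ v) (hb : b ≠ v), G.Reachable a b ∧
    ¬ (G.induce {u : V | u ≠ v}).Reachable ⟨a, ha⟩ ⟨b, hb⟩

def NoCutVtxIn (G : SimpleGraph V) (B : Set V) : Prop :=
  ∀ v ∈ B, B = {v} ∨ (G.induce (B \ {v})).Connected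

def IsBlockSet (G : SimpleGraph V) (B : Set V) : Prop :=
  (G.induce B).Connected ∧ NoCutVtxIn G B ∧
    ∀ B' : Set V, B ⊆ B' → (G.induce B').Connected → NoCutVtxIn G B' → B' = B

def IsEndBlock (G : SimpleGraph V) (B : Set V) : Prop :=
  IsBlockSet G B ∧ {v | v ∈ B ∧ IsCutVertex G v}.Subsingleton

def IsThreeConnected (G : SimpleGraph V) : Prop :=
  4 ≤ Nat.card V ∧ ∀ S : Set V, S.ncard ≤ 2 → (G.induce (Sᶜ : Set V)).Connected

def IsTwoConnected (G : SimpleGraph V) : Prop :=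
  3 ≤ Nat.card V ∧ ∀ v : V, (G.induce ({v}ᶜ : Set V)).Connected

def TypeOne (k : ℕ) (G : SimpleGraph V) : Prop :=
  IsThreeConnected G ∧ {v : V | degN G v < k}.Subsingleton

/-- the graph `G - θ + θ₁θ₂`. -/
def modGraph (G : SimpleGraph V) (θ θ₁ θ₂ : V) (h₁ : θ₁ ≠ θ) (h₂ : θ₂ ≠ θ) :
    SimpleGraph ↥{u : V | u ≠ θ} :=
  (G.induce {u : V | u ≠ θ}) ⊔ SimpleGraph.fromEdgeSet {s(⟨θ₁, h₁⟩, ⟨θ₂, h₂⟩)}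

def TypeTwo (k : ℕ) (G : SimpleGraph V) (θ θ₁ θ₂ : V) : Prop :=
  degN G θ = 2 ∧ (∀ v, degN G v = 2 → v = θ) ∧
  G.Adj θ θ₁ ∧ G.Adj θ θ₂ ∧ θ₁ ≠ θ₂ ∧
  ∃ (h₁ : θ₁ ≠ θ) (h₂ : θ₂ ≠ θ),
    IsThreeConnected (modGraph G θ θ₁ θ₂ h₁ h₂) ∧
    ∀ v, k ≤ degN (modGraph G θ θ₁ θ₂ h₁ h₂) v

def IsKWeak (k : ℕ) (G : SimpleGraph V) : Prop :=
  TypeOne k G ∨ ∃ θ θ₁ θ₂, TypeTwo k G θ θ₁ θ₂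

inductive IsTrigonal : SimpleGraph V → SimpleGraph V → Set V → Prop
  | base (a b c : V) (hab : a ≠ b) (hbc : b ≠ c) (hac : a ≠ c) :
      IsTrigonal (SimpleGraph.fromEdgeSet {s(a, b), s(b, c), s(a, c)})
        (SimpleGraph.fromEdgeSet {s(a, b), s(b, c), s(a, c)}) {a, b, c}
  | extend (T B : SimpleGraph V) (S : Set V) (a b x : V)
      (h : IsTrigonal T B S) (hx : x ∉ S) (hab : B.Adj a b) :
      IsTrigonal (T ⊔ SimpleGraph.fromEdgeSet {s(a, x), s(x, b)})
        (B.deleteEdges {s(a, b)} ⊔ SimpleGraph.fromEdgeSet {s(a, x), s(x, b)})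
        (insert x S)

inductive IsTetragonal : SimpleGraph V → SimpleGraph V → Set V → Prop
  | base (a b c d : V) (hab : a ≠ b) (hac : a ≠ c) (had : a ≠ d)
      (hbc : b ≠ c) (hbd : b ≠ d) (hcd : c ≠ d) :
      IsTetragonal (SimpleGraph.fromEdgeSet {s(a, b), s(b, c), s(c, d), s(d, a)})
        (SimpleGraph.fromEdgeSet {s(a, b), s(b, c), s(c, d), s(d, a)}) {a, b, c, d}
  | extend (T B : SimpleGraph V) (S : Set V) (a b x y : V)
      (h : IsTetragonal T B S) (hx : x ∉ S) (hy : y ∉ S) (hxy : x ≠ y) (hab : B.Adj a b) :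
      IsTetragonal (T ⊔ SimpleGraph.fromEdgeSet {s(a, x), s(x, y), s(y, b)})
        (B.deleteEdges {s(a, b)} ⊔ SimpleGraph.fromEdgeSet {s(a, x), s(x, y), s(y, b)})
        (insert x (insert y S))

def IsTetragonalSubgraph (G T B : SimpleGraph V) (S : Set V) : Prop :=
  IsTetragonal T B S ∧ T ≤ G

def IsOptimalTetragonal (G T B : SimpleGraph V) (S : Set V) : Prop :=
  IsTetragonalSubgraph G T B S ∧
  (∀ (T' B' : SimpleGraph V) (S' : Set V),
    IsTetragonalSubgraph G T' B' S' → S'.ncard ≤ S.ncard) ∧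
  (∀ (T' B' : SimpleGraph V) (S' : Set V),
    IsTetragonalSubgraph G T' B' S' → S'.ncard = S.ncard →
      (G.induce S').edgeSet.ncard ≤ (G.induce S).edgeSet.ncard)


lemma tetra_B_le_T {T B : SimpleGraph V} {S : Set V} (h : IsTetragonal T B S) : B ≤ T := by
  induction h with
  | base => exact le_rfl
  | extend T B S a b x y h hx hy hxy hab ih =>
      exact sup_le_sup (le_trans (SimpleGraph.deleteEdges_le _) ih) le_rfl

lemma tetra_support {T B : SimpleGraph V} {S : Set V} (h : IsTetragonal T B S) :
    ∀ u w, T.Adj u w → u ∈ S ∧ w ∈ S := by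
  induction h with
  | base a b c d hab hac had hbc hbd hcd =>
      intro u w huw
      rw [SimpleGraph.fromEdgeSet_adj] at huw
      obtain ⟨he, -⟩ := huw
      simp only [Set.mem_insert_iff, Set.mem_singleton_iff, Sym2.eq_iff] at he ⊢
      rcases he with (⟨rfl,rfl⟩|⟨rfl,rfl⟩)|(⟨rfl,rfl⟩|⟨rfl,rfl⟩)|(⟨rfl,rfl⟩|⟨rfl,rfl⟩)|(⟨rfl,rfl⟩|⟨rfl,rfl⟩) <;> tauto
  | extend T B S a b x y h hx hy hxy hab ih =>
      intro u w huw
      have hax : a ∈ S ∧ b ∈ S := ih a b (tetra_B_le_T h hab)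
      rcases huw with huw | huw
      · have := ih u w huw
        simp only [Set.mem_insert_iff]; tauto
      · rw [SimpleGraph.fromEdgeSet_adj] at huw
        obtain ⟨he, -⟩ := huw
        simp only [Set.mem_insert_iff, Set.mem_singleton_iff, Sym2.eq_iff] at he ⊢
        rcases he with (⟨rfl,rfl⟩|⟨rfl,rfl⟩)|(⟨rfl,rfl⟩|⟨rfl,rfl⟩)|(⟨rfl,rfl⟩|⟨rfl,rfl⟩) <;> tauto

lemma tetra_finite {T B : SimpleGraph V} {S : Set V} (h : IsTetragonal T B S) : S.Finite := by
  induction h with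
  | base a b c d => exact (Set.finite_singleton d).insert c |>.insert b |>.insert a
  | extend T B S a b x y h hx hy hxy hab ih => exact (ih.insert y).insert x

lemma sep_insert_of_mem {P : V → Prop} {z : V} {S : Set V} (h : P z) :
    {u ∈ insert z S | P u} = insert z {u ∈ S | P u} := by
  ext u; simp only [Set.mem_setOf_eq, Set.mem_insert_iff]
  constructor
  · rintro ⟨rfl | hu, hp⟩
    · exact Or.inl rfl
    · exact Or.inr ⟨hu, hp⟩
  · rintro (rfl | ⟨hu, hp⟩)
    · exact ⟨Or.inl rfl, h⟩
    · exact ⟨Or.inr hu, hp⟩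

lemma sep_insert_of_not {P : V → Prop} {z : V} {S : Set V} (h : ¬ P z) :
    {u ∈ insert z S | P u} = {u ∈ S | P u} := by
  ext u; simp only [Set.mem_setOf_eq, Set.mem_insert_iff]
  constructor
  · rintro ⟨rfl | hu, hp⟩
    · exact absurd hp h
    · exact ⟨hu, hp⟩
  · rintro ⟨hu, hp⟩; exact ⟨Or.inr hu, hp⟩

lemma filt_eq {a b c' d : V} (c : V → Fin 2) {i j : Fin 2} (hij : i ≠ j)
    (ha : c a = i) (hb : c b = j) (hc' : c c' = i) (hd : c d = j) :
    {u ∈ ({a, b, c', d} : Set V) | c u = i} = {a, c'} := by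
  ext u
  simp only [Set.mem_setOf_eq, Set.mem_insert_iff, Set.mem_singleton_iff]
  constructor
  · rintro ⟨(rfl|rfl|rfl|rfl), hu⟩
    · exact Or.inl rfl
    · exact absurd (by rw [← hu, hb] : i = j) hij
    · exact Or.inr rfl
    · exact absurd (by rw [← hu, hd] : i = j) hij
  · rintro (rfl|rfl)
    · exact ⟨Or.inl rfl, ha⟩
    · exact ⟨Or.inr (Or.inr (Or.inl rfl)), hc'⟩

lemma quad_count {a b c' d : V} (c : V → Fin 2) (hac : a ≠ c') (hbd : b ≠ d)
    (h1 : c a ≠ c b) (hca : c c' = c a) (hdb : c d = c b) :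
    {u ∈ ({a, b, c', d} : Set V) | c u = 0}.ncard
      = {u ∈ ({a, b, c', d} : Set V) | c u = 1}.ncard := by
  have h01 : (0 : Fin 2) ≠ 1 := by omega
  have h0 : c a = 0 ∨ c a = 1 := by omega
  rcases h0 with h0 | h0
  · have hb1 : c b = 1 := by omega
    rw [filt_eq c h01 h0 hb1 (hca.trans h0) (hdb.trans hb1),
      show {u ∈ ({a, b, c', d} : Set V) | c u = 1} = {b, d} by
        have := filt_eq (a := b) (b := a) (c' := d) (d := c') c h01.symm hb1 h0
          (hdb.trans hb1) (hca.trans h0)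
        rw [← this]; ext u; simp only [Set.mem_setOf_eq, Set.mem_insert_iff,
          Set.mem_singleton_iff]; tauto,
      Set.ncard_pair hac, Set.ncard_pair hbd]
  · have hb1 : c b = 0 := by omega
    rw [show {u ∈ ({a, b, c', d} : Set V) | c u = 0} = {b, d} by
        have := filt_eq (a := b) (b := a) (c' := d) (d := c') c h01 hb1 h0
          (hdb.trans hb1) (hca.trans h0)
        rw [← this]; ext u; simp only [Set.mem_setOf_eq, Set.mem_insert_iff,
          Set.mem_singleton_iff]; tauto,
      filt_eq c h01.symm h0 hb1 (hca.trans h0) (hdb.trans hb1),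
      Set.ncard_pair hbd, Set.ncard_pair hac]

lemma tetra_balanced {T B : SimpleGraph V} {S : Set V} (h : IsTetragonal T B S)
    (c : V → Fin 2) (hc : ∀ u w, T.Adj u w → c u ≠ c w) :
    {u ∈ S | c u = 0}.ncard = {u ∈ S | c u = 1}.ncard := by
  induction h with
  | base a b c' d hab hac had hbc hbd hcd =>
      have adj : ∀ (p q : V), s(p,q) ∈ ({s(a,b), s(b,c'), s(c',d), s(d,a)} : Set (Sym2 V)) →
          p ≠ q → c p ≠ c q := fun p q he hne => hc p q ((SimpleGraph.fromEdgeSet_adj _).2 ⟨he, hne⟩)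
      have h1 : c a ≠ c b := adj a b (by simp) hab
      have h2 : c b ≠ c c' := adj b c' (by simp) hbc
      have h3 : c c' ≠ c d := adj c' d (by simp) hcd
      have h4 : c d ≠ c a := adj d a (by simp) (Ne.symm had)
      exact quad_count c hac hbd h1 (by omega) (by omega)
  | extend T B S a b x y h hx hy hxy hab ih =>
      have hT : ∀ u w, T.Adj u w → c u ≠ c w := fun u w hw => hc u w (Or.inl hw)
      have habS : a ∈ S ∧ b ∈ S := tetra_support h a b (tetra_B_le_T h hab)
      have haxne : a ≠ x := fun e => hx (e ▸ habS.1)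
      have cax : c a ≠ c x :=
        hc a x (Or.inr ((SimpleGraph.fromEdgeSet_adj _).2 ⟨by simp, haxne⟩))
      have cxy : c x ≠ c y :=
        hc x y (Or.inr ((SimpleGraph.fromEdgeSet_adj _).2 ⟨by simp, hxy⟩))
      have hfin := tetra_finite h
      have f0 : {u ∈ S | c u = (0 : Fin 2)}.Finite := hfin.subset fun u hu => hu.1
      have f1 : {u ∈ S | c u = (1 : Fin 2)}.Finite := hfin.subset fun u hu => hu.1
      have ihh := ih hT
      have hx0 : x ∉ {u ∈ S | c u = (0 : Fin 2)} := fun hm => hx hm.1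
      have hx1 : x ∉ {u ∈ S | c u = (1 : Fin 2)} := fun hm => hx hm.1
      have hy0 : y ∉ {u ∈ S | c u = (0 : Fin 2)} := fun hm => hy hm.1
      have hy1 : y ∉ {u ∈ S | c u = (1 : Fin 2)} := fun hm => hy hm.1
      have hcx : c x = 0 ∨ c x = 1 := by omega
      rcases hcx with hcx | hcx
      · have hcy : c y = 1 := by omega
        rw [sep_insert_of_mem (P := fun u => c u = (0:Fin 2)) hcx,
          sep_insert_of_not (P := fun u => c u = (0:Fin 2)) (by omega : ¬ c y = (0:Fin 2)),
          sep_insert_of_not (P := fun u => c u = (1:Fin 2)) (by omega : ¬ c x = (1:Fin 2)),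
          sep_insert_of_mem (P := fun u => c u = (1:Fin 2)) hcy,
          Set.ncard_insert_of_notMem hx0 f0, Set.ncard_insert_of_notMem hy1 f1, ihh]
      · have hcy : c y = 0 := by omega
        rw [sep_insert_of_not (P := fun u => c u = (0:Fin 2)) (by omega : ¬ c x = (0:Fin 2)),
          sep_insert_of_mem (P := fun u => c u = (0:Fin 2)) hcy,
          sep_insert_of_mem (P := fun u => c u = (1:Fin 2)) hcx,
          sep_insert_of_not (P := fun u => c u = (1:Fin 2)) (by omega : ¬ c y = (1:Fin 2)),
          Set.ncard_insert_of_notMem hy0 f0, Set.ncard_insert_of_notMem hx1 f1, ihh]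
lemma map_fromEdgeSet' (σ : V ≃ V) (E : Set (Sym2 V)) :
    (SimpleGraph.fromEdgeSet E).map σ.toEmbedding
      = SimpleGraph.fromEdgeSet (Sym2.map σ '' E) := by
  ext u w
  simp only [SimpleGraph.map_adj', SimpleGraph.fromEdgeSet_adj, Equiv.coe_toEmbedding,
    Set.mem_image]
  constructor
  · rintro ⟨-, p, q, ⟨hpq, hne⟩, rfl, rfl⟩
    exact ⟨⟨s(p, q), hpq, Sym2.map_pair_eq σ p q⟩, fun h => hne (σ.injective h)⟩
  · rintro ⟨⟨e, he, hmap⟩, hne⟩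
    induction e using Sym2.ind with
    | _ p q =>
      rw [Sym2.map_pair_eq, Sym2.eq_iff] at hmap
      rcases hmap with ⟨rfl, rfl⟩ | ⟨rfl, rfl⟩
      · exact ⟨hne, p, q, ⟨he, fun h => hne (h ▸ rfl)⟩, rfl, rfl⟩
      · exact ⟨hne, q, p, ⟨(Sym2.eq_swap ▸ he), fun h => hne (h ▸ rfl)⟩, rfl, rfl⟩

lemma map_sup' (σ : V ≃ V) (G H : SimpleGraph V) :
    (G ⊔ H).map σ.toEmbedding = G.map σ.toEmbedding ⊔ H.map σ.toEmbedding := by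
  ext u w
  simp only [SimpleGraph.map_adj, SimpleGraph.sup_adj]
  constructor
  · rintro ⟨p, q, h | h, rfl, rfl⟩
    · exact Or.inl ⟨p, q, h, rfl, rfl⟩
    · exact Or.inr ⟨p, q, h, rfl, rfl⟩
  · rintro (⟨p, q, h, rfl, rfl⟩ | ⟨p, q, h, rfl, rfl⟩)
    · exact ⟨p, q, Or.inl h, rfl, rfl⟩
    · exact ⟨p, q, Or.inr h, rfl, rfl⟩

lemma map_deleteEdges' (σ : V ≃ V) (B : SimpleGraph V) (e : Sym2 V) :
    (B.deleteEdges {e}).map σ.toEmbedding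
      = (B.map σ.toEmbedding).deleteEdges {Sym2.map σ e} := by
  ext u w
  simp only [SimpleGraph.map_adj', SimpleGraph.deleteEdges_adj, Equiv.coe_toEmbedding,
    Set.mem_singleton_iff]
  constructor
  · rintro ⟨-, p, q, ⟨h, hne⟩, rfl, rfl⟩
    refine ⟨⟨fun e => h.ne (σ.injective e), p, q, h, rfl, rfl⟩, fun hc => hne ?_⟩
    have : Sym2.map σ s(p, q) = Sym2.map σ e := by rw [Sym2.map_pair_eq]; exact hc
    exact Sym2.map.injective σ.injective this
  · rintro ⟨⟨hne', p, q, h, rfl, rfl⟩, hne⟩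
    exact ⟨hne', p, q, ⟨h, fun hc => hne (by rw [← Sym2.map_pair_eq, hc])⟩, rfl, rfl⟩

lemma map_adj_of_adj (σ : V ≃ V) {B : SimpleGraph V} {a b : V} (h : B.Adj a b) :
    (B.map σ.toEmbedding).Adj (σ a) (σ b) := ⟨fun e => h.ne (σ.injective e), a, b, h, rfl, rfl⟩

lemma sym2_image_explicit (σ : V ≃ V) (e₁ e₂ e₃ : Sym2 V) :
    Sym2.map σ '' {e₁, e₂, e₃} = {Sym2.map σ e₁, Sym2.map σ e₂, Sym2.map σ e₃} := by
  rw [Set.image_insert_eq, Set.image_insert_eq, Set.image_singleton]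

lemma tetra_map {T B : SimpleGraph V} {S : Set V} (h : IsTetragonal T B S) (σ : V ≃ V) :
    IsTetragonal (T.map σ.toEmbedding) (B.map σ.toEmbedding) (σ '' S) := by
  induction h with
  | base a b c d hab hac had hbc hbd hcd =>
      have himg : σ '' {a, b, c, d} = {σ a, σ b, σ c, σ d} := by
        rw [Set.image_insert_eq, Set.image_insert_eq, Set.image_insert_eq, Set.image_singleton]
      have hE : (SimpleGraph.fromEdgeSet {s(a,b), s(b,c), s(c,d), s(d,a)}).map σ.toEmbedding
          = SimpleGraph.fromEdgeSet {s(σ a, σ b), s(σ b, σ c), s(σ c, σ d), s(σ d, σ a)} := by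
        rw [map_fromEdgeSet' σ]
        congr 1
        rw [Set.image_insert_eq, Set.image_insert_eq, Set.image_insert_eq, Set.image_singleton]
        simp [Sym2.map_pair_eq]
      rw [hE, himg]
      exact IsTetragonal.base _ _ _ _ (fun h => hab (σ.injective h)) (fun h => hac (σ.injective h))
        (fun h => had (σ.injective h)) (fun h => hbc (σ.injective h))
        (fun h => hbd (σ.injective h)) (fun h => hcd (σ.injective h))
  | extend T B S a b x y h hx hy hxy hab ih =>
      have hE : (SimpleGraph.fromEdgeSet {s(a,x), s(x,y), s(y,b)}).map σ.toEmbedding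
          = SimpleGraph.fromEdgeSet {s(σ a, σ x), s(σ x, σ y), s(σ y, σ b)} := by
        rw [map_fromEdgeSet' σ, sym2_image_explicit]
        simp [Sym2.map_pair_eq]
      have h1 : (T ⊔ SimpleGraph.fromEdgeSet {s(a,x), s(x,y), s(y,b)}).map σ.toEmbedding
          = T.map σ.toEmbedding ⊔ SimpleGraph.fromEdgeSet {s(σ a, σ x), s(σ x, σ y), s(σ y, σ b)} := by
        rw [map_sup', hE]
      have h2 : (B.deleteEdges {s(a,b)} ⊔ SimpleGraph.fromEdgeSet {s(a,x), s(x,y), s(y,b)}).map σ.toEmbedding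
          = (B.map σ.toEmbedding).deleteEdges {s(σ a, σ b)}
            ⊔ SimpleGraph.fromEdgeSet {s(σ a, σ x), s(σ x, σ y), s(σ y, σ b)} := by
        rw [map_sup', hE, map_deleteEdges']
        rw [Sym2.map_pair_eq]
      have h3 : σ '' insert x (insert y S) = insert (σ x) (insert (σ y) (σ '' S)) := by
        rw [Set.image_insert_eq, Set.image_insert_eq]
      rw [h1, h2, h3]
      exact IsTetragonal.extend _ _ _ (σ a) (σ b) (σ x) (σ y) ih
        (fun hc => hx (by rcases hc with ⟨u, hu, he⟩; rwa [σ.injective he] at hu))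
        (fun hc => hy (by rcases hc with ⟨u, hu, he⟩; rwa [σ.injective he] at hu))
        (fun hc => hxy (σ.injective hc)) (map_adj_of_adj σ hab)

/-- edges of `G` with both endpoints in `S` -/
def edgesIn (G : SimpleGraph V) (S : Set V) : Set (Sym2 V) :=
  {e | e ∈ G.edgeSet ∧ ∀ u ∈ e, u ∈ S}

lemma induce_edge_ncard (G : SimpleGraph V) (S : Set V) :
    (G.induce S).edgeSet.ncard = (edgesIn G S).ncard := by
  rw [show edgesIn G S = Sym2.map (Subtype.val : ↥S → V) '' (G.induce S).edgeSet from ?_,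
    Set.ncard_image_of_injective _ (Sym2.map.injective Subtype.val_injective)]
  ext e
  induction e using Sym2.ind with
  | _ p q =>
    simp only [edgesIn, Set.mem_setOf_eq, SimpleGraph.mem_edgeSet, Set.mem_image]
    constructor
    · rintro ⟨hadj, hmem⟩
      have hp : p ∈ S := hmem p (by simp)
      have hq : q ∈ S := hmem q (by simp)
      refine ⟨s(⟨p, hp⟩, ⟨q, hq⟩), ?_, by simp⟩
      simpa using hadj
    · rintro ⟨e', he', hmap⟩
      induction e' using Sym2.ind with
      | _ u w =>
        rw [Sym2.map_pair_eq, Sym2.eq_iff] at hmap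
        have hadj : G.Adj u.1 w.1 := by simpa using he'
        rcases hmap with ⟨h1, h2⟩ | ⟨h1, h2⟩
        · refine ⟨by rw [← h1, ← h2]; exact hadj, ?_⟩
          intro z hz
          rw [Sym2.mem_iff] at hz
          rcases hz with rfl | rfl
          · exact h1 ▸ u.2
          · exact h2 ▸ w.2
        · refine ⟨by rw [← h1, ← h2]; exact hadj.symm, ?_⟩
          intro z hz
          rw [Sym2.mem_iff] at hz
          rcases hz with rfl | rfl
          · exact h2 ▸ w.2
          · exact h1 ▸ u.2

lemma edgesIn_at (G : SimpleGraph V) (S : Set V) (y : V) (hy : y ∈ S) :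
    {e ∈ edgesIn G S | y ∈ e}.ncard = (G.neighborSet y ∩ S).ncard := by
  rw [show {e ∈ edgesIn G S | y ∈ e} = (fun u => s(y, u)) '' (G.neighborSet y ∩ S) from ?_,
    Set.ncard_image_of_injective _ (fun u u' h => Sym2.congr_right.1 h)]
  ext e
  simp only [Set.mem_setOf_eq, Set.mem_image, Set.mem_inter_iff, SimpleGraph.mem_neighborSet]
  constructor
  · rintro ⟨⟨hE, hmem⟩, hye⟩
    obtain ⟨u, rfl⟩ := Sym2.mem_iff_exists.1 hye
    exact ⟨u, ⟨by simpa using hE, hmem u (by simp)⟩, rfl⟩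
  · rintro ⟨u, ⟨hadj, hu⟩, rfl⟩
    refine ⟨⟨by simpa using hadj, ?_⟩, by simp⟩
    intro z hz
    rw [Sym2.mem_iff] at hz
    rcases hz with rfl | rfl
    · exact hy
    · exact hu

lemma ncard_split [Fintype V] (A : Set (Sym2 V)) (p : Sym2 V → Prop) :
    A.ncard = {e ∈ A | ¬ p e}.ncard + {e ∈ A | p e}.ncard := by
  haveI : Finite (Sym2 V) := Finite.of_surjective (Quot.mk _) Quot.mk_surjective
  rw [← Set.ncard_union_eq ?_ (Set.toFinite _) (Set.toFinite _)]
  · congr 1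
    ext e
    simp only [Set.mem_union, Set.mem_setOf_eq]
    tauto
  · rw [Set.disjoint_left]
    rintro e ⟨-, hn⟩ ⟨-, hp⟩
    exact hn hp

lemma edgesIn_swap_eq (G : SimpleGraph V) (S : Set V) {y v : V} (hy : y ∈ S) (hv : v ∉ S) :
    {e ∈ edgesIn G S | y ∉ e} = {e ∈ edgesIn G (insert v (S \ {y})) | v ∉ e} := by
  ext e
  induction e using Sym2.ind with
  | _ p q =>
    simp only [Set.mem_setOf_eq, edgesIn]
    constructor
    · rintro ⟨⟨hE, hmem⟩, hye⟩
      have hp := hmem p (by simp); have hq := hmem q (by simp)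
      have hpy : p ≠ y := fun h => hye (h ▸ Sym2.mem_mk_left p q)
      have hqy : q ≠ y := fun h => hye (h ▸ Sym2.mem_mk_right p q)
      refine ⟨⟨hE, ?_⟩, ?_⟩
      · intro z hz
        rw [Sym2.mem_iff] at hz
        rcases hz with rfl | rfl
        · exact Or.inr ⟨hp, hpy⟩
        · exact Or.inr ⟨hq, hqy⟩
      · intro hve
        rw [Sym2.mem_iff] at hve
        rcases hve with rfl | rfl
        · exact hv hp
        · exact hv hq
    · rintro ⟨⟨hE, hmem⟩, hve⟩
      have hpv : p ≠ v := fun h => hve (h ▸ Sym2.mem_mk_left p q)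
      have hqv : q ≠ v := fun h => hve (h ▸ Sym2.mem_mk_right p q)
      have hp : p ∈ S \ {y} := (hmem p (by simp)).resolve_left hpv
      have hq : q ∈ S \ {y} := (hmem q (by simp)).resolve_left hqv
      refine ⟨⟨hE, ?_⟩, ?_⟩
      · intro z hz
        rw [Sym2.mem_iff] at hz
        rcases hz with rfl | rfl
        · exact hp.1
        · exact hq.1
      · intro hye
        rw [Sym2.mem_iff] at hye
        rcases hye with rfl | rfl
        · exact hp.2 rfl
        · exact hq.2 rfl

lemma swap_image [DecidableEq V] {S : Set V} {y v : V} (hy : y ∈ S) (hv : v ∉ S) :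
    (Equiv.swap y v) '' S = insert v (S \ {y}) := by
  ext u
  simp only [Set.mem_image, Set.mem_insert_iff, Set.mem_diff, Set.mem_singleton_iff]
  constructor
  · rintro ⟨w, hw, rfl⟩
    rcases eq_or_ne w y with rfl | hwy
    · left; rw [Equiv.swap_apply_left]
    · have hwv : w ≠ v := fun h => hv (h ▸ hw)
      rw [Equiv.swap_apply_of_ne_of_ne hwy hwv]
      exact Or.inr ⟨hw, hwy⟩
  · rintro (rfl | ⟨hu, huy⟩)
    · exact ⟨y, hy, Equiv.swap_apply_left y u⟩
    · have huv : u ≠ v := fun h => hv (h ▸ hu)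
      exact ⟨u, hu, Equiv.swap_apply_of_ne_of_ne huy huv⟩


lemma bip_iso [Finite V] (G : SimpleGraph V) (S X Y : Set V) (m : ℕ)
    (hU : X ∪ Y = S) (hdisj : Disjoint X Y) (hX : X.ncard = m) (hY : Y.ncard = m)
    (hadj : ∀ u w : V, u ∈ S → w ∈ S →
      (G.Adj u w ↔ ((u ∈ X ∧ w ∈ Y) ∨ (u ∈ Y ∧ w ∈ X)))) :
    Nonempty ((G.induce S) ≃g completeBipartiteGraph (Fin m) (Fin m)) := by
  classical
  have eX : ↥X ≃ Fin m := Finite.equivFinOfCardEq (by rw [Nat.card_coe_set_eq, hX])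
  have eY : ↥Y ≃ Fin m := Finite.equivFinOfCardEq (by rw [Nat.card_coe_set_eq, hY])
  let f : ↥S ≃ Fin m ⊕ Fin m :=
    (Equiv.setCongr hU.symm).trans ((Equiv.Set.union hdisj).trans (Equiv.sumCongr eX eY))
  refine ⟨⟨f, ?_⟩⟩
  intro u w
  have keyX : ∀ (z : ↥S) (hz : (z : V) ∈ X), f z = Sum.inl (eX ⟨z, hz⟩) := by
    intro z hz
    show (Equiv.sumCongr eX eY) (Equiv.Set.union hdisj (Equiv.setCongr hU.symm z)) = _
    rw [Equiv.Set.union_apply_left hdisj hz]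
    rfl
  have keyY : ∀ (z : ↥S) (hz : (z : V) ∈ Y), f z = Sum.inr (eY ⟨z, hz⟩) := by
    intro z hz
    show (Equiv.sumCongr eX eY) (Equiv.Set.union hdisj (Equiv.setCongr hU.symm z)) = _
    rw [Equiv.Set.union_apply_right hdisj hz]
    rfl
  have hmemS : ∀ z : ↥S, (z : V) ∈ X ∨ (z : V) ∈ Y := by
    intro z
    have h2 : (z : V) ∈ X ∪ Y := by rw [hU]; exact z.2
    exact h2
  simp only [SimpleGraph.comap_adj, Function.Embedding.coe_subtype, completeBipartiteGraph_adj]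
  rw [hadj u w u.2 w.2]
  rcases hmemS u with hu | hu <;> rcases hmemS w with hw | hw
  · have nu : (u : V) ∉ Y := Set.disjoint_left.1 hdisj hu
    have nw : (w : V) ∉ Y := Set.disjoint_left.1 hdisj hw
    rw [keyX u hu, keyX w hw]; simp; tauto
  · have nu : (u : V) ∉ Y := Set.disjoint_left.1 hdisj hu
    have nw : (w : V) ∉ X := Set.disjoint_right.1 hdisj hw
    rw [keyX u hu, keyY w hw]; simp; tauto
  · have nu : (u : V) ∉ X := Set.disjoint_right.1 hdisj hu
    have nw : (w : V) ∉ Y := Set.disjoint_left.1 hdisj hw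
    rw [keyY u hu, keyX w hw]; simp; tauto
  · have nu : (u : V) ∉ X := Set.disjoint_right.1 hdisj hu
    have nw : (w : V) ∉ X := Set.disjoint_right.1 hdisj hw
    rw [keyY u hu, keyY w hw]; simp; tauto

/-- Lemma 3.7 (1): degrees into an optimal tetragonal subgraph of a bipartite graph. -/
theorem optimal_tetragonal_degree {V : Type*} [Fintype V] (G T B : SimpleGraph V) (S : Set V)
    (m : ℕ) (hbip : G.Colorable 2) (hopt : IsOptimalTetragonal G T B S)
    (hcard : S.ncard = 2 * m) (hm : 3 ≤ m) :
    (∀ v : V, v ∉ S → (G.neighborSet v ∩ S).ncard ≤ m) ∧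
    (∀ v : V, v ∉ S → (G.neighborSet v ∩ S).ncard = m →
      Nonempty ((G.induce S) ≃g completeBipartiteGraph (Fin m) (Fin m))) := by
  classical
  obtain ⟨C⟩ := hbip
  obtain ⟨⟨htet, hTG⟩, hmax, hemax⟩ := hopt
  set c : V → Fin 2 := ⇑C with hc_def
  have hCc : ∀ u w : V, G.Adj u w → c u ≠ c w := fun u w h => C.valid h
  have hfin : S.Finite := tetra_finite htet
  have hcT : ∀ u w, T.Adj u w → c u ≠ c w := fun u w h => hCc u w (hTG h)
  have hbal := tetra_balanced htet c hcT
  have hf0 : {u ∈ S | c u = (0 : Fin 2)}.Finite := hfin.subset fun u hu => hu.1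
  have hf1 : {u ∈ S | c u = (1 : Fin 2)}.Finite := hfin.subset fun u hu => hu.1
  have hsum : {u ∈ S | c u = (0 : Fin 2)}.ncard + {u ∈ S | c u = (1 : Fin 2)}.ncard = 2 * m := by
    rw [← Set.ncard_union_eq ?_ hf0 hf1]
    · rw [show {u ∈ S | c u = (0 : Fin 2)} ∪ {u ∈ S | c u = (1 : Fin 2)} = S from ?_, hcard]
      ext u
      simp only [Set.mem_union, Set.mem_setOf_eq]
      constructor
      · rintro (h | h) <;> exact h.1
      · intro hu
        have : c u = 0 ∨ c u = 1 := by omega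
        tauto
    · rw [Set.disjoint_left]
      rintro u ⟨-, h0⟩ ⟨-, h1⟩
      omega
  have h0m : {u ∈ S | c u = (0 : Fin 2)}.ncard = m := by omega
  have h1m : {u ∈ S | c u = (1 : Fin 2)}.ncard = m := by omega
  have claimB : ∀ v : V, {u ∈ S | c u ≠ c v}.ncard = m := by
    intro v
    have hv01 : c v = 0 ∨ c v = 1 := by omega
    rcases hv01 with hv0 | hv0
    · rw [show {u ∈ S | c u ≠ c v} = {u ∈ S | c u = (1 : Fin 2)} from ?_, h1m]
      ext u; simp only [Set.mem_setOf_eq, hv0]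
      constructor
      · rintro ⟨h1, h2⟩; exact ⟨h1, by omega⟩
      · rintro ⟨h1, h2⟩; exact ⟨h1, by omega⟩
    · rw [show {u ∈ S | c u ≠ c v} = {u ∈ S | c u = (0 : Fin 2)} from ?_, h0m]
      ext u; simp only [Set.mem_setOf_eq, hv0]
      constructor
      · rintro ⟨h1, h2⟩; exact ⟨h1, by omega⟩
      · rintro ⟨h1, h2⟩; exact ⟨h1, by omega⟩
  have claimBfin : ∀ v : V, {u ∈ S | c u ≠ c v}.Finite := fun v => hfin.subset fun u hu => hu.1
  have claimA : ∀ v : V, G.neighborSet v ∩ S ⊆ {u ∈ S | c u ≠ c v} := by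
    intro v u hu
    exact ⟨hu.2, fun h => hCc v u hu.1 h.symm⟩
  have part1 : ∀ v : V, (G.neighborSet v ∩ S).ncard ≤ m := by
    intro v
    rw [← claimB v]
    exact Set.ncard_le_ncard (claimA v) (claimBfin v)
  refine ⟨fun v _ => part1 v, ?_⟩
  intro v hv hdeg
  have hNv : G.neighborSet v ∩ S = {u ∈ S | c u ≠ c v} :=
    Set.eq_of_subset_of_ncard_le (claimA v) (by rw [hdeg, claimB v]) (claimBfin v)
  have key : ∀ y : V, y ∈ S → c y = c v → ∀ x : V, x ∈ S → c x ≠ c v → G.Adj y x := by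
    intro y hyS hycv
    have hyv : y ≠ v := fun e => hv (e ▸ hyS)
    have hσfix : ∀ p ∈ S, p ≠ y → (Equiv.swap y v) p = p := by
      intro p hp hpy
      exact Equiv.swap_apply_of_ne_of_ne hpy (fun h => hv (h ▸ hp))
    have hle : T.map (Equiv.swap y v).toEmbedding ≤ G := by
      rintro u w ⟨-, p, q, hpq, rfl, rfl⟩
      obtain ⟨hpS, hqS⟩ := tetra_support htet p q hpq
      have hpq_ne : p ≠ q := hpq.ne
      show G.Adj ((Equiv.swap y v) p) ((Equiv.swap y v) q)
      by_cases hpy : p = y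
      · have hqy : q ≠ y := fun h => hpq_ne (hpy.trans h.symm)
        have hqmem : q ∈ {u ∈ S | c u ≠ c v} := by
          refine ⟨hqS, ?_⟩
          have h1 := hcT p q hpq
          rw [hpy] at h1
          omega
        rw [← hNv] at hqmem
        rw [hpy, Equiv.swap_apply_left, hσfix q hqS hqy]
        exact hqmem.1
      · by_cases hqy : q = y
        · have hpmem : p ∈ {u ∈ S | c u ≠ c v} := by
            refine ⟨hpS, ?_⟩
            have h1 := hcT p q hpq
            rw [hqy] at h1
            omega
          rw [← hNv] at hpmem
          rw [hqy, Equiv.swap_apply_left, hσfix p hpS hpy]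
          exact hpmem.1.symm
        · rw [hσfix p hpS hpy, hσfix q hqS hqy]
          exact hTG hpq
    have hsub : IsTetragonalSubgraph G (T.map (Equiv.swap y v).toEmbedding)
        (B.map (Equiv.swap y v).toEmbedding) ((Equiv.swap y v) '' S) :=
      ⟨tetra_map htet (Equiv.swap y v), hle⟩
    have hcard' : ((Equiv.swap y v) '' S).ncard = S.ncard :=
      Set.ncard_image_of_injective _ (Equiv.swap y v).injective
    have hE := hemax _ _ _ hsub hcard'
    rw [induce_edge_ncard, induce_edge_ncard, swap_image hyS hv] at hE
    have split1 := ncard_split (edgesIn G S) (fun e => y ∈ e)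
    have split2 := ncard_split (edgesIn G (insert v (S \ {y}))) (fun e => v ∈ e)
    rw [edgesIn_at G S y hyS] at split1
    rw [edgesIn_at G (insert v (S \ {y})) v (Set.mem_insert v _)] at split2
    have heq : {e ∈ edgesIn G S | ¬ y ∈ e} = {e ∈ edgesIn G (insert v (S \ {y})) | ¬ v ∈ e} :=
      edgesIn_swap_eq G S hyS hv
    rw [heq] at split1
    have hvS' : G.neighborSet v ∩ (insert v (S \ {y})) = G.neighborSet v ∩ S := by
      ext u
      simp only [Set.mem_inter_iff, Set.mem_insert_iff, Set.mem_diff,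
        Set.mem_singleton_iff, SimpleGraph.mem_neighborSet]
      constructor
      · rintro ⟨hadj, rfl | ⟨hu, -⟩⟩
        · exact absurd hadj (G.irrefl)
        · exact ⟨hadj, hu⟩
      · rintro ⟨hadj, hu⟩
        have huy : u ≠ y := by
          intro h
          have h2 := hCc v u hadj
          rw [h] at h2
          omega
        exact ⟨hadj, Or.inr ⟨hu, huy⟩⟩
    rw [hvS', hdeg] at split2
    have hbound : m ≤ (G.neighborSet y ∩ S).ncard := by omega
    have hNy : G.neighborSet y ∩ S = {u ∈ S | c u ≠ c y} := by
      refine Set.eq_of_subset_of_ncard_le (claimA y) ?_ (claimBfin y)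
      rw [claimB y]
      exact hbound
    intro x hxS hxv
    have hxmem : x ∈ {u ∈ S | c u ≠ c y} := ⟨hxS, by omega⟩
    rw [← hNy] at hxmem
    exact hxmem.1
  refine bip_iso G S {u ∈ S | c u ≠ c v} {u ∈ S | c u = c v} m ?_ ?_ (claimB v) ?_ ?_
  · ext u
    simp only [Set.mem_union, Set.mem_setOf_eq]
    constructor
    · rintro (h | h) <;> exact h.1
    · intro hu
      rcases eq_or_ne (c u) (c v) with h | h
      · exact Or.inr ⟨hu, h⟩
      · exact Or.inl ⟨hu, h⟩
  · rw [Set.disjoint_left]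
    rintro u ⟨-, h1⟩ ⟨-, h2⟩
    exact h1 h2
  · have hv01 : c v = 0 ∨ c v = 1 := by omega
    rcases hv01 with hv0 | hv0
    · rw [show {u ∈ S | c u = c v} = {u ∈ S | c u = (0 : Fin 2)} from ?_]
      · exact h0m
      · ext u; simp only [Set.mem_setOf_eq, hv0]
    · rw [show {u ∈ S | c u = c v} = {u ∈ S | c u = (1 : Fin 2)} from ?_]
      · exact h1m
      · ext u; simp only [Set.mem_setOf_eq, hv0]
  · intro u w huS hwS
    constructor
    · intro hadj
      have hne := hCc u w hadj
      rcases eq_or_ne (c u) (c v) with h | h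
      · exact Or.inr ⟨⟨huS, h⟩, ⟨hwS, by omega⟩⟩
      · exact Or.inl ⟨⟨huS, h⟩, ⟨hwS, by omega⟩⟩
    · rintro (⟨hu, hw⟩ | ⟨hu, hw⟩)
      · exact (key w hwS hw.2 u huS hu.2).symm
      · exact key u huS hu.2 w hwS hw.2

end Dean
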